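/- Let μ be a Banach measure on a group G and let n ≥ 2. If a subset A ⊆ G has the property that for every m ∈ ℕ there exists a set B ⊆ G with |B| = m such that μ(⋂_{c ∈ C} cA) = 0 for every n-element subset C ⊆ B, then μ(A) = 0. Consequently, the ideal N_μ = {A ⊆ G : μ(A) = 0} is Pack_{<ω}-complete. -/

import Mathlib

open scoped Pointwise Topology

/-- A subset `A` of a group `G` is *large* if `F * A = G` for some finite `F ⊆ G`. -/
def IsLarge {G : Type*} [Group G] (A : Set G) : Prop :=
  ∃ F : Finset G, (F : Set G) * A = Set.univ

/-- A subset `A` of a group `G` is *small* if `B \ A` is large for every large `B ⊆ G`. -/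
def IsSmallSet {G : Type*} [Group G] (A : Set G) : Prop :=
  ∀ B : Set G, IsLarge B → IsLarge (B \ A)

/-- A translation-invariant ideal on a group `G`: a proper family of subsets of `G`
containing the empty set, closed under subsets, finite unions and left translations. -/
structure IsInvariantIdeal (G : Type*) [Group G] (I : Set (Set G)) : Prop where
  proper : I ≠ Set.univ
  empty_mem : ∅ ∈ I
  subset_mem : ∀ ⦃A B : Set G⦄, A ∈ I → B ⊆ A → B ∈ I
  union_mem : ∀ ⦃A B : Set G⦄, A ∈ I → B ∈ I → A ∪ B ∈ I
  translate_mem : ∀ (x : G) ⦃A : Set G⦄, A ∈ I → (fun a => x * a) '' A ∈ I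

/-- A subset `A ⊆ G` is `I`-large if `G \ FA ∈ I` for some finite `F ⊆ G`. -/
def IsILarge {G : Type*} [Group G] (I : Set (Set G)) (A : Set G) : Prop :=
  ∃ F : Finset G, (Set.univ : Set G) \ ((F : Set G) * A) ∈ I

/-- A subset `A ⊆ G` is `I`-small if `L \ A` is `I`-large for every `I`-large `L ⊆ G`. -/
def IsISmall {G : Type*} [Group G] (I : Set (Set G)) (A : Set G) : Prop :=
  ∀ L : Set G, IsILarge I L → IsILarge I (L \ A)

/-- A *Banach measure* on a group `G`: a finitely additive, left-invariant probability
"measure" defined on all subsets of `G`, with values in `[0,1]`. -/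
structure BanachMeasure (G : Type*) [Group G] where
  toFun : Set G → ℝ
  nonneg : ∀ A : Set G, 0 ≤ toFun A
  le_one : ∀ A : Set G, toFun A ≤ 1
  additive : ∀ A B : Set G, Disjoint A B → toFun (A ∪ B) = toFun A + toFun B
  measure_univ : toFun Set.univ = 1
  invariant : ∀ (x : G) (A : Set G), toFun ((fun a => x * a) '' A) = toFun A

/-- The Følner condition: for every finite `F ⊆ G` and `ε > 0` there is a nonempty finite
`E ⊆ G` with `|E △ xE| < ε·|E|` for all `x ∈ F`.  A group is *amenable* iff it satisfies it. -/
def FolnerCond (G : Type*) [Group G] : Prop :=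
  ∀ (F : Finset G) (ε : ℝ), 0 < ε → ∃ E : Finset G, E.Nonempty ∧
    ∀ x ∈ F, ((symmDiff (E : Set G) ((fun a => x * a) '' (E : Set G))).ncard : ℝ) < ε * E.card

/-- An ideal `I` on `G` is `Pack_n`-complete if it contains every set `A` with
`I`-`Pack_n(A) ≥ ℵ₀`, i.e. every `A` such that for each `m` there is a set `B` of
cardinality `m` with `⋂_{c ∈ C} cA ∈ I` for each `n`-element `C ⊆ B`. -/
def PackNComplete {G : Type*} [Group G] (I : Set (Set G)) (n : ℕ) : Prop :=
  ∀ A : Set G,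
    (∀ m : ℕ, ∃ B : Finset G, B.card = m ∧
      ∀ C : Finset G, C ⊆ B → C.card = n → (⋂ c ∈ C, (fun a => c * a) '' A) ∈ I) →
    A ∈ I

section Aux

variable {G : Type*} [Group G] (μ : BanachMeasure G)

lemma BanachMeasure.measure_empty : μ.toFun ∅ = 0 := by
  have h := μ.additive ∅ ∅ (by simp)
  simp at h
  linarith

lemma BanachMeasure.mono {A B : Set G} (h : A ⊆ B) : μ.toFun A ≤ μ.toFun B := by
  have hd : Disjoint A (B \ A) := disjoint_sdiff_self_right
  have := μ.additive A (B \ A) hd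
  rw [Set.union_diff_cancel h] at this
  have := μ.nonneg (B \ A)
  linarith

lemma BanachMeasure.sum_disjoint {ι : Type*} (s : Finset ι) (f : ι → Set G)
    (h : (s : Set ι).PairwiseDisjoint f) :
    μ.toFun (⋃ i ∈ s, f i) = ∑ i ∈ s, μ.toFun (f i) := by
  classical
  induction s using Finset.cons_induction with
  | empty => simpa using μ.measure_empty
  | cons a s ha ih =>
    have hdisj : Disjoint (f a) (⋃ i ∈ s, f i) := by
      simp only [Set.disjoint_iUnion_right]
      intro i hi
      exact h (by simp) (by simp [hi]) (by rintro rfl; exact ha hi)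
    have hpw : (s : Set ι).PairwiseDisjoint f :=
      h.subset (by intro x hx; simp only [Finset.coe_cons, Set.mem_insert_iff]; right; exact hx)
    rw [Finset.sum_cons, ← ih hpw, ← μ.additive _ _ hdisj]
    congr 1
    simp [Set.iUnion_or, Set.iUnion_union_distrib]

open Classical in
lemma BanachMeasure.key_bound (n : ℕ) (A : Set G) (B : Finset G)
    (hB : ∀ C : Finset G, C ⊆ B → C.card = n →
      μ.toFun (⋂ c ∈ C, (fun a => c * a) '' A) = 0) :
    (B.card : ℝ) * μ.toFun A ≤ (n : ℝ) - 1 := by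
  set f : G → Set G := fun c => (fun a => c * a) '' A with hf
  set P : Finset G → Set G := fun T => {x | ∀ c ∈ B, x ∈ f c ↔ c ∈ T} with hP
  -- pairwise disjointness of the atoms
  have hpw : ((B.powerset : Finset (Finset G)) : Set (Finset G)).PairwiseDisjoint P := by
    intro T₁ h₁ T₂ h₂ hne
    simp only [Finset.coe_powerset, Set.mem_preimage, Set.mem_powerset_iff] at h₁ h₂
    rw [Function.onFun, Set.disjoint_left]
    intro x hx₁ hx₂
    apply hne
    apply Finset.Subset.antisymm
    · intro c hc
      have hcB : c ∈ B := by
        exact_mod_cast h₁ (by exact_mod_cast hc)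
      exact (hx₂ c hcB).1 ((hx₁ c hcB).2 hc)
    · intro c hc
      have hcB : c ∈ B := by
        exact_mod_cast h₂ (by exact_mod_cast hc)
      exact (hx₁ c hcB).1 ((hx₂ c hcB).2 hc)
  -- the atoms cover everything
  have hcover : (⋃ T ∈ B.powerset, P T) = Set.univ := by
    ext x
    simp only [Set.mem_iUnion, Set.mem_univ, iff_true]
    refine ⟨B.filter (fun c => x ∈ f c), by simp [Finset.filter_subset], ?_⟩
    intro c hc
    simp [Finset.mem_filter, hc]
  -- each translate decomposes into atoms
  have hdecomp : ∀ c ∈ B, f c = ⋃ T ∈ B.powerset.filter (fun T => c ∈ T), P T := by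
    intro c hc
    ext x
    simp only [Set.mem_iUnion, Finset.mem_filter, Finset.mem_powerset, exists_prop]
    constructor
    · intro hx
      refine ⟨B.filter (fun d => x ∈ f d), ⟨Finset.filter_subset _ _, ?_⟩, ?_⟩
      · simp [Finset.mem_filter, hc, hx]
      · intro d hd
        simp [Finset.mem_filter, hd]
    · rintro ⟨T, ⟨hTB, hcT⟩, hxT⟩
      exact (hxT c hc).2 hcT
  -- measure of each translate
  have hmeas : ∀ c ∈ B, μ.toFun (f c) =
      ∑ T ∈ B.powerset, (if c ∈ T then μ.toFun (P T) else 0) := by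
    intro c hc
    rw [hdecomp c hc, μ.sum_disjoint _ _ (hpw.subset (by simp [Set.subset_def]; tauto))]
    rw [Finset.sum_filter]
  -- each atom with ≥ n indices is null
  have hnull : ∀ T ∈ B.powerset, n ≤ T.card → μ.toFun (P T) = 0 := by
    intro T hT hn
    rw [Finset.mem_powerset] at hT
    obtain ⟨C, hCT, hCcard⟩ := Finset.exists_subset_card_eq hn
    have hsub : P T ⊆ ⋂ c ∈ C, f c := by
      intro x hx
      simp only [Set.mem_iInter]
      intro c hcC
      exact (hx c (hT (hCT hcC))).2 (hCT hcC)
    have h0 := hB C (hCT.trans hT) hCcard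
    have h1 := μ.mono hsub
    have h2 := μ.nonneg (P T)
    rw [h0] at h1
    linarith
  -- total mass of atoms is 1
  have htot : ∑ T ∈ B.powerset, μ.toFun (P T) = 1 := by
    rw [← μ.sum_disjoint _ _ hpw, hcover, μ.measure_univ]
  -- compute the sum of measures of translates
  have hsum : (B.card : ℝ) * μ.toFun A = ∑ T ∈ B.powerset, (T.card : ℝ) * μ.toFun (P T) := by
    have : (B.card : ℝ) * μ.toFun A = ∑ c ∈ B, μ.toFun (f c) := by
      simp only [hf]
      rw [Finset.sum_congr rfl (fun c _ => μ.invariant c A)]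
      simp [Finset.sum_const, nsmul_eq_mul]
    rw [this, Finset.sum_congr rfl hmeas, Finset.sum_comm]
    refine Finset.sum_congr rfl ?_
    intro T hT
    rw [Finset.mem_powerset] at hT
    rw [Finset.sum_ite_mem, Finset.inter_eq_right.mpr hT]
    simp [Finset.sum_const, nsmul_eq_mul]
  rw [hsum]
  calc ∑ T ∈ B.powerset, (T.card : ℝ) * μ.toFun (P T)
      ≤ ∑ T ∈ B.powerset, ((n : ℝ) - 1) * μ.toFun (P T) := by
        refine Finset.sum_le_sum ?_
        intro T hT
        by_cases hc : n ≤ T.card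
        · rw [hnull T hT hc]; simp
        · push_neg at hc
          have h1 : (T.card : ℝ) ≤ (n : ℝ) - 1 := by
            have : T.card + 1 ≤ n := hc
            have : (T.card : ℝ) + 1 ≤ (n : ℝ) := by exact_mod_cast this
            linarith
          exact mul_le_mul_of_nonneg_right h1 (μ.nonneg _)
    _ = (n : ℝ) - 1 := by rw [← Finset.mul_sum, htot, mul_one]

lemma BanachMeasure.key (n : ℕ) (A : Set G)
    (H : ∀ m : ℕ, ∃ B : Finset G, B.card = m ∧
      ∀ C : Finset G, C ⊆ B → C.card = n →
        μ.toFun (⋂ c ∈ C, (fun a => c * a) '' A) = 0) :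
    μ.toFun A = 0 := by
  by_contra h
  have hpos : 0 < μ.toFun A := lt_of_le_of_ne (μ.nonneg A) (Ne.symm h)
  obtain ⟨m, hm⟩ := exists_nat_gt (((n : ℝ) - 1) / μ.toFun A)
  obtain ⟨B, hBcard, hB⟩ := H m
  have hbound := μ.key_bound n A B hB
  rw [hBcard] at hbound
  rw [div_lt_iff₀ hpos] at hm
  linarith

end Aux

/-- For a Banach measure `μ` on a group `G` and `n ≥ 2`: if for every `m` there is a set `B`
of cardinality `m` such that `μ(⋂_{c ∈ C} cA) = 0` for every `n`-element `C ⊆ B`, then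
`μ(A) = 0`.  Consequently the ideal `N_μ` is `Pack_{<ω}`-complete. -/
theorem banachMeasure_null_ideal_pack_complete {G : Type*} [Group G]
    (μ : BanachMeasure G) (n : ℕ) (hn : 2 ≤ n) :
    (∀ A : Set G,
      (∀ m : ℕ, ∃ B : Finset G, B.card = m ∧
        ∀ C : Finset G, C ⊆ B → C.card = n →
          μ.toFun (⋂ c ∈ C, (fun a => c * a) '' A) = 0) →
      μ.toFun A = 0) ∧
    (∀ k : ℕ, 2 ≤ k → PackNComplete {A : Set G | μ.toFun A = 0} k) := by
  refine ⟨fun A hA => μ.key n A hA, fun k _ A hA => μ.key k A hA⟩
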